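/- Let F be a k-regular graph on r vertices, H an n-vertex blow-up of F with all vertex classes of size at least x and |N(Z)| ≤ s for all vertex classes Z. If rs ≠ kn and e(H) = ns/2 − x(rs − kn)/2, then at least one vertex class of H has size exactly x, and every vertex class V_i with |V_i| > x satisfies |N(V_i)| = s. -/

import Mathlib

open Finset

/-- The blow-up of a graph `F` with class sizes given by `w`. -/
def SimpleGraph.blowup {α : Type*} (F : SimpleGraph α) (w : α → ℕ) :
    SimpleGraph (Σ a, Fin (w a)) where
  Adj x y := F.Adj x.1 y.1
  symm := ⟨fun _ _ h => F.adj_symm h⟩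
  loopless := ⟨fun x h => F.loopless.irrefl x.1 h⟩

open scoped Classical in
/-- Equality case of the edge bound for blow-ups: if `rs ≠ kn` and
`e(H) = ns/2 - x(rs - kn)/2`, then some vertex class has size exactly `x`,
and every class of size `> x` has neighbourhood of size exactly `s`. -/
theorem stmt_4 {α : Type*} [Fintype α] (F : SimpleGraph α) (k r : ℕ)
    (hreg : F.IsRegularOfDegree k) (hr : Fintype.card α = r)
    (w : α → ℕ) (n s x : ℕ) (hn : n = ∑ a, w a)
    (hx : ∀ a, x ≤ w a)
    (hs : ∀ a, ∑ b ∈ F.neighborFinset a, w b ≤ s)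
    (hne : r * s ≠ k * n)
    (heq : (2 * (F.blowup w).edgeFinset.card : ℤ) =
      (n : ℤ) * s - (x : ℤ) * ((r : ℤ) * s - (k : ℤ) * n)) :
    (∃ a, w a = x) ∧ ∀ a, x < w a → ∑ b ∈ F.neighborFinset a, w b = s := by
  classical
  set d : α → ℕ := fun a => ∑ b ∈ F.neighborFinset a, w b with hd
  -- degree in the blow-up
  have hdeg : ∀ v : Σ a, Fin (w a), (F.blowup w).degree v = d v.1 := by
    intro v
    rw [SimpleGraph.degree, SimpleGraph.neighborFinset_eq_filter, Finset.card_filter]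
    rw [← Finset.univ_sigma_univ, Finset.sum_sigma]
    simp only [SimpleGraph.blowup]
    have : ∀ b : α, (∑ _i : Fin (w b), if F.Adj v.1 b then 1 else 0)
        = if F.Adj v.1 b then w b else 0 := by
      intro b
      by_cases h : F.Adj v.1 b <;> simp [h]
    refine (Finset.sum_congr rfl fun b _ => ?_).trans (?_ : (∑ b : α, if F.Adj v.1 b then w b else 0) = _)
    · rw [← this b]; exact Finset.sum_congr rfl fun _ _ => by congr
    rw [show (∑ b : α, if F.Adj v.1 b then w b else 0)
        = ∑ b ∈ Finset.univ.filter (F.Adj v.1), w b from (Finset.sum_filter _ _).symm,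
      ← SimpleGraph.neighborFinset_eq_filter]
  -- double counting edges
  have h2e : 2 * (F.blowup w).edgeFinset.card = ∑ a, w a * d a := by
    rw [← SimpleGraph.sum_degrees_eq_twice_card_edges]
    rw [Finset.sum_congr rfl fun v _ => hdeg v]
    rw [← Finset.univ_sigma_univ, Finset.sum_sigma]
    simp [mul_comm]
  -- total of d over all classes
  have hkn : ∑ a, d a = k * n := by
    have key : ∀ a, d a = ∑ b, if F.Adj a b then w b else 0 := by
      intro a
      rw [show (∑ b : α, if F.Adj a b then w b else 0)
          = ∑ b ∈ Finset.univ.filter (F.Adj a), w b from (Finset.sum_filter _ _).symm,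
        ← SimpleGraph.neighborFinset_eq_filter]
    rw [Finset.sum_congr rfl fun a _ => key a, Finset.sum_comm]
    have h1 : ∀ b, (∑ a, if F.Adj a b then w b else 0) = k * w b := by
      intro b
      rw [show (∑ a : α, if F.Adj a b then w b else 0)
          = ∑ a ∈ Finset.univ.filter (fun a => F.Adj a b), w b from
          (Finset.sum_filter _ _).symm]
      rw [Finset.sum_const, smul_eq_mul]
      congr 1
      have : (Finset.univ.filter fun a => F.Adj a b) = F.neighborFinset b := by
        ext a
        simp [SimpleGraph.adj_comm]
      rw [this]
      exact hreg b
    rw [Finset.sum_congr rfl fun b _ => h1 b, ← Finset.mul_sum, hn]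
  -- the key zero sum
  have hzero : ∑ a, ((w a : ℤ) - x) * ((s : ℤ) - d a) = 0 := by
    have step : ∑ a, ((w a : ℤ) - x) * ((s : ℤ) - d a)
        = ∑ a, ((w a : ℤ) * s) - ∑ a, ((w a : ℤ) * (d a : ℤ))
          - ∑ _a : α, ((x : ℤ) * s) + ∑ a, ((x : ℤ) * (d a : ℤ)) := by
      rw [← Finset.sum_sub_distrib, ← Finset.sum_sub_distrib, ← Finset.sum_add_distrib]
      exact Finset.sum_congr rfl fun a _ => by ring
    have eW : (∑ a, ((w a : ℤ) * s)) = (n : ℤ) * s := by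
      rw [← Finset.sum_mul, ← Nat.cast_sum, ← hn]
    have eE : (∑ a, ((w a : ℤ) * (d a : ℤ))) = 2 * ((F.blowup w).edgeFinset.card : ℤ) := by
      exact_mod_cast h2e.symm
    have eC : (∑ _a : α, ((x : ℤ) * s)) = (r : ℤ) * ((x : ℤ) * s) := by
      rw [Finset.sum_const, Finset.card_univ, hr, nsmul_eq_mul]
    have eD : (∑ a, ((x : ℤ) * (d a : ℤ))) = (x : ℤ) * ((k : ℤ) * n) := by
      rw [← Finset.mul_sum, ← Nat.cast_sum, hkn]
      push_cast
      ring
    rw [step, eW, eE, eC, eD]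
    linarith [heq]
  have hterm : ∀ a ∈ Finset.univ, ((w a : ℤ) - x) * ((s : ℤ) - d a) = 0 := by
    rw [← Finset.sum_eq_zero_iff_of_nonneg]
    · exact hzero
    · intro a _
      apply mul_nonneg <;> simp only [sub_nonneg, Int.ofNat_le]
      · exact_mod_cast hx a
      · exact_mod_cast hs a
  have hcases : ∀ a, w a = x ∨ d a = s := by
    intro a
    rcases mul_eq_zero.mp (hterm a (Finset.mem_univ a)) with h | h
    · left; have : (w a : ℤ) = x := by linarith
      exact_mod_cast this
    · right; have : (d a : ℤ) = s := by linarith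
      exact_mod_cast this
  constructor
  · by_contra hno
    push_neg at hno
    have hall : ∀ a, d a = s := fun a => (hcases a).resolve_left (hno a)
    apply hne
    have : ∑ a, d a = r * s := by
      rw [Finset.sum_congr rfl fun a _ => hall a]
      simp [hr, mul_comm]
    rw [← this, hkn]
  · intro a ha
    rcases hcases a with h | h
    · omega
    · exact h
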